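/- Let G be a finite abelian group with a perfect alternating biadditive pairing B : G → G → ℝ/ℤ, and let L₁, L₂, L₃ ≤ G be Lagrangian subgroups. Then card(L₁ ⊓ L₂) · card(L₃ ⊓ (L₁ ⊔ L₂)) = card(L₁ ⊓ L₂ ⊓ L₃) · card(L₃). Equivalently, the pairing identifies the quotient (L₁ ⊓ L₂) ⧸ (L₁ ⊓ L₂ ⊓ L₃) with the Pontryagin dual of L₃ ⧸ (L₃ ⊓ (L₁ ⊔ L₂)). -/

import Mathlib

noncomputable section Stmt14Aux

local notation "T" => AddCircle (1 : ℝ)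

namespace Stmt14Aux

/-- Extension lemma: homs to `ℝ/ℤ` extend from subgroups. -/
lemma exists_extension {G : Type*} [AddCommGroup G] (H : AddSubgroup G) (f : ↥H →+ T) :
    ∃ g : G →+ T, ∀ h : ↥H, g h = f h := by
  have inst : Module.Injective ℤ T := (Module.Baer.of_divisible _).injective
  obtain ⟨h, hh⟩ := Module.Injective.extension_property ℤ T ↥H G
    H.subtype.toIntLinearMap Subtype.val_injective f.toIntLinearMap
  exact ⟨h.toAddMonoidHom, fun x => LinearMap.congr_fun hh x⟩

/-- The `n`-torsion of `ℝ/ℤ` has exactly `n` elements. -/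
lemma card_torsion (n : ℕ) (hn : 0 < n) :
    Nat.card {x : T // (n : ℤ) • x = 0} = n := by
  haveI : Fact ((0:ℝ) < 1) := ⟨one_pos⟩
  set u : T := (((1:ℝ) / (n:ℝ) : ℝ) : T) with hu
  have hord : addOrderOf u = n := AddCircle.addOrderOf_period_div hn
  have hgen : ∀ x : T, (n : ℤ) • x = 0 → ∃ m : ℕ, m • u = x := by
    intro x hx
    have hx' : n • x = 0 := by rwa [natCast_zsmul] at hx
    have hd : addOrderOf x ∣ n := addOrderOf_dvd_of_nsmul_eq_zero hx'
    have hfin : IsOfFinAddOrder x := by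
      rw [← addOrderOf_pos_iff]
      rcases Nat.eq_zero_or_pos (addOrderOf x) with h0 | h0
      · rw [h0] at hd; omega
      · exact h0
    obtain ⟨m, hg, hl, he⟩ := AddCircle.exists_gcd_eq_one_of_isOfFinAddOrder hfin
    set d := addOrderOf x with hdef
    have hd0 : 0 < d := hfin.addOrderOf_pos
    refine ⟨m * (n / d), ?_⟩
    have hcast : ((m * (n / d) : ℕ) : ℝ) • ((1:ℝ)/(n:ℝ)) = (m : ℝ) / (d : ℝ) * 1 := by
      rw [Nat.cast_mul, Nat.cast_div hd (by exact_mod_cast hd0.ne')]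
      field_simp
      have hn' : (n:ℝ) ≠ 0 := by exact_mod_cast hn.ne'
      have hd' : (d:ℝ) ≠ 0 := by exact_mod_cast hd0.ne'
      rw [smul_eq_mul]
      field_simp
    calc (m * (n / d)) • u = ((((m * (n / d) : ℕ) : ℝ) • ((1:ℝ)/(n:ℝ)) : ℝ) : T) := by
          rw [hu, ← AddCircle.coe_nsmul, nsmul_eq_mul]; norm_num
      _ = x := by rw [hcast, he]
  have hun : (zmultiplesHom T u) (n : ℤ) = 0 := by
    have := addOrderOf_nsmul_eq_zero u
    rw [hord] at this
    simpa [natCast_zsmul] using this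
  set g : ZMod n →+ T := ZMod.lift n ⟨zmultiplesHom T u, hun⟩ with hg
  have hgnat : ∀ m : ℕ, g (m : ZMod n) = m • u := by
    intro m
    have : ((m : ℤ) : ZMod n) = (m : ZMod n) := by push_cast; ring
    rw [← this, hg, ZMod.lift_coe]
    simp [natCast_zsmul]
  have e : ZMod n ≃ {x : T // (n : ℤ) • x = 0} := by
    haveI : NeZero n := ⟨hn.ne'⟩
    refine Equiv.ofBijective (fun k => ⟨g k, ?_⟩) ⟨?_, ?_⟩
    · rw [← map_zsmul g]
      have h2 : (n : ℤ) • k = 0 := by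
        rw [zsmul_eq_mul]
        push_cast
        simp [ZMod.natCast_self]
      rw [h2, map_zero]
    · intro a b hab
      have h : g a = g b := congrArg Subtype.val hab
      have key : ∀ k : ZMod n, g k = 0 → k = 0 := by
        intro k hk
        have hv : ((k.val : ℕ) : ZMod n) = k := ZMod.natCast_rightInverse k
        rw [← hv, hgnat] at hk
        have hdvd : addOrderOf u ∣ k.val := addOrderOf_dvd_of_nsmul_eq_zero hk
        rw [hord] at hdvd
        have hlt : k.val < n := ZMod.val_lt k
        have : k.val = 0 := Nat.eq_zero_of_dvd_of_lt hdvd hlt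
        rw [← hv, this]; simp
      have := key (a - b) (by rw [map_sub, h, sub_self])
      exact sub_eq_zero.mp this
    · intro x
      obtain ⟨m, hm⟩ := hgen x.1 x.2
      exact ⟨(m : ZMod n), Subtype.ext (by simpa [hgnat] using hm)⟩
  rw [Nat.card_congr e.symm]
  simp [Nat.card_zmod]

lemma card_dual_zmod (n : ℕ) (hn : 0 < n) : Nat.card (ZMod n →+ T) = n := by
  have e1 : {f : ℤ →+ T // f (n : ℤ) = 0} ≃ (ZMod n →+ T) := ZMod.lift n
  have e2 : {x : T // (n : ℤ) • x = 0} ≃ {f : ℤ →+ T // f (n : ℤ) = 0} := by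
    refine Equiv.subtypeEquiv (zmultiplesHom T) fun x => ?_
    simp [zmultiplesHom_apply]
  rw [← Nat.card_congr (e2.trans e1), card_torsion n hn]

/-- A finite abelian group has as many characters (valued in `ℝ/ℤ`) as elements. -/
lemma card_dual (A : Type*) [AddCommGroup A] [Finite A] :
    Nat.card (A →+ T) = Nat.card A := by
  classical
  obtain ⟨ι, hι, n, hn, ⟨e⟩⟩ := AddCommGroup.equiv_directSum_zmod_of_finite' A
  have e' : A ≃+ ∀ i, ZMod (n i) := e.trans (DirectSum.addEquivProd _)
  have edual : (A →+ T) ≃+ ∀ i, (ZMod (n i) →+ T) :=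
    (AddEquiv.addMonoidHomCongrLeft e').trans
      (Pi.addMonoidHomAddEquiv _ T)
  rw [Nat.card_congr e'.toEquiv, Nat.card_congr edual.toEquiv, Nat.card_pi, Nat.card_pi]
  exact Finset.prod_congr rfl fun i _ => by
    rw [card_dual_zmod (n i) (by have := hn i; omega), Nat.card_zmod]

section Pairing

variable {G : Type*} [AddCommGroup G] (B : G →+ G →+ T)

/-- The orthogonal complement of a subgroup under the pairing. -/
def perp (H : AddSubgroup G) : AddSubgroup G where
  carrier := {x | ∀ h ∈ H, B x h = 0}
  zero_mem' := fun h _ => by simp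
  add_mem' := fun {a b} ha hb h hh => by
    rw [map_add]; simp [ha h hh, hb h hh]
  neg_mem' := fun {a} ha h hh => by
    rw [map_neg]; simp [ha h hh]

lemma mem_perp {H : AddSubgroup G} {x : G} : x ∈ perp B H ↔ ∀ h ∈ H, B x h = 0 := Iff.rfl

lemma skew (halt : ∀ g : G, B g g = 0) (x y : G) : B x y = - B y x := by
  have h := halt (x + y)
  simp only [map_add, AddMonoidHom.add_apply, halt x, halt y, zero_add, add_zero] at h
  exact eq_neg_of_add_eq_zero_left (by rw [add_comm]; exact h)

/-- Restriction of the pairing to the dual of a subgroup. -/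
noncomputable def resDual (H : AddSubgroup G) : G →+ (↥H →+ T) where
  toFun x := (B x).comp H.subtype
  map_zero' := by ext h; simp
  map_add' x y := by ext h; simp

@[simp] lemma resDual_apply (H : AddSubgroup G) (x : G) (h : ↥H) :
    resDual B H x h = B x h := rfl

lemma ker_resDual (H : AddSubgroup G) : (resDual B H).ker = perp B H := by
  ext x
  simp only [AddMonoidHom.mem_ker, mem_perp]
  constructor
  · intro hx h hh
    exact congrArg (fun f => (f : ↥H →+ T) ⟨h, hh⟩) hx
  · intro hx
    ext h
    exact hx h h.2

lemma surj_resDual (hperf : Function.Bijective ⇑B) (H : AddSubgroup G) :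
    Function.Surjective ⇑(resDual B H) := by
  intro f
  obtain ⟨g, hg⟩ := exists_extension H f
  obtain ⟨x, hx⟩ := hperf.2 g
  exact ⟨x, by ext h; rw [resDual_apply, hx]; exact hg h⟩

variable [Finite G]

lemma card_perp (hperf : Function.Bijective ⇑B) (H : AddSubgroup G) :
    Nat.card G = Nat.card ↥H * Nat.card ↥(perp B H) := by
  have h1 := AddSubgroup.card_eq_card_quotient_mul_card_addSubgroup (resDual B H).ker
  rw [Nat.card_congr (QuotientAddGroup.quotientKerEquivOfSurjective _
    (surj_resDual B hperf H)).toEquiv, card_dual, ker_resDual] at h1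
  exact h1

lemma subgroup_eq_of_le_of_card_le {H K : AddSubgroup G} (hle : H ≤ K)
    (hcard : Nat.card ↥K ≤ Nat.card ↥H) : H = K := by
  have h1 : (H : Set G).ncard = Nat.card ↥H := (Nat.card_coe_set_eq _).symm
  have h2 : (K : Set G).ncard = Nat.card ↥K := (Nat.card_coe_set_eq _).symm
  have := Set.eq_of_subset_of_ncard_le hle (by omega) (Set.toFinite _)
  exact SetLike.ext' this

lemma perp_perp (hperf : Function.Bijective ⇑B) (halt : ∀ g : G, B g g = 0)
    (H : AddSubgroup G) : perp B (perp B H) = H := by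
  have hle : H ≤ perp B (perp B H) := by
    intro x hx y hy
    rw [skew B halt]
    rw [mem_perp] at hy
    rw [hy x hx, neg_zero]
  refine (subgroup_eq_of_le_of_card_le hle ?_).symm
  have h1 := card_perp B hperf H
  have h2 := card_perp B hperf (perp B H)
  have hpos : 0 < Nat.card ↥(perp B H) := Nat.card_pos
  have := Nat.eq_of_mul_eq_mul_left hpos (by rw [mul_comm (Nat.card ↥H)] at h1; omega :
    Nat.card ↥(perp B H) * Nat.card ↥(perp B (perp B H)) = Nat.card ↥(perp B H) * Nat.card ↥H)
  omega

/-- The key counting lemma. -/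
lemma key_count (hperf : Function.Bijective ⇑B) (halt : ∀ g : G, B g g = 0)
    (M N : AddSubgroup G) (hN : perp B N = N) :
    Nat.card ↥(M ⊓ N) * Nat.card ↥N = Nat.card ↥M * Nat.card ↥(N ⊓ perp B M) := by
  classical
  have hNle : N ≤ perp B N := le_of_eq hN.symm
  set K : AddSubgroup ↥M := (M ⊓ N).addSubgroupOf M with hK
  have hvanish : ∀ n : ↥N, ∀ m ∈ K, ((B n.1).comp M.subtype) m = 0 := by
    intro n m hm
    have hmN : (m : G) ∈ N := ((AddSubgroup.mem_addSubgroupOf).mp hm).2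
    have h0 : B m.1 n.1 = 0 := (mem_perp B).mp (hNle hmN) n.1 n.2
    simp only [AddMonoidHom.comp_apply, AddSubgroup.coe_subtype]
    rw [skew B halt, h0, neg_zero]
  set ψ : ↥N →+ ((↥M ⧸ K) →+ T) :=
    { toFun := fun n => QuotientAddGroup.lift K ((B n.1).comp M.subtype) (hvanish n)
      map_zero' := by ext x; simp
      map_add' := fun a b => by ext x; simp; rfl } with hψ
  have hψ_mk : ∀ (n : ↥N) (m : ↥M), ψ n (QuotientAddGroup.mk m) = B n.1 m.1 := by
    intro n m; rfl
  have hker : ψ.ker = (perp B M).addSubgroupOf N := by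
    ext n
    simp only [AddMonoidHom.mem_ker, AddSubgroup.mem_addSubgroupOf, mem_perp]
    constructor
    · intro h m hm
      have := congrArg (fun f => (f : (↥M ⧸ K) →+ T) (QuotientAddGroup.mk ⟨m, hm⟩)) h
      simpa [hψ_mk] using this
    · intro h
      ext x
      simpa [hψ_mk] using h x.1 x.2
  have hsurj : Function.Surjective ⇑ψ := by
    intro F
    set q : G →+ G ⧸ N := QuotientAddGroup.mk' N with hq
    set θ : ↥M →+ G ⧸ N := q.comp M.subtype with hθ
    have hkerθ : θ.ker = K := by
      ext m
      simp only [hθ, AddMonoidHom.mem_ker, AddMonoidHom.comp_apply, AddSubgroup.coe_subtype, hq,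
        QuotientAddGroup.mk'_apply, QuotientAddGroup.eq_zero_iff, hK,
        AddSubgroup.mem_addSubgroupOf, AddSubgroup.mem_inf]
      exact ⟨fun h => ⟨m.2, h⟩, fun h => h.2⟩
    set e2 : ↥(θ.range) ≃+ ↥M ⧸ K :=
      (QuotientAddGroup.quotientKerEquivRange θ).symm.trans
        (QuotientAddGroup.quotientAddEquivOfEq hkerθ) with he2_def
    obtain ⟨g', hg'⟩ := exists_extension θ.range (F.comp e2.toAddMonoidHom)
    set g : G →+ T := g'.comp q with hg
    have hgN : ∀ l ∈ N, g l = 0 := by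
      intro l hl
      simp [hg, hq, (QuotientAddGroup.eq_zero_iff l).mpr hl]
    obtain ⟨x, hx⟩ := hperf.2 g
    have hxN : x ∈ N := by
      rw [← hN, mem_perp]
      intro l hl
      rw [hx]; exact hgN l hl
    refine ⟨⟨x, hxN⟩, ?_⟩
    ext m
    show ψ ⟨x, hxN⟩ (QuotientAddGroup.mk m) = F (QuotientAddGroup.mk m)
    rw [hψ_mk]
    have h1 : B x m.1 = g m.1 := by rw [hx]
    have h2 : g m.1 = g' (θ m) := rfl
    have hmem : θ m ∈ θ.range := ⟨m, rfl⟩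
    have h3 : g' (θ m) = F (e2 ⟨θ m, hmem⟩) := hg' ⟨θ m, hmem⟩
    have h4 : e2 ⟨θ m, hmem⟩ = QuotientAddGroup.mk m := by
      have he : (QuotientAddGroup.quotientKerEquivRange θ) (QuotientAddGroup.mk m)
          = ⟨θ m, hmem⟩ := Subtype.ext rfl
      simp only [he2_def, AddEquiv.trans_apply, ← he, AddEquiv.symm_apply_apply]
      exact QuotientAddGroup.quotientAddEquivOfEq_mk hkerθ _
    rw [h1, h2, h3, h4]
  have h1 : Nat.card ↥N = Nat.card (↥M ⧸ K) * Nat.card ψ.ker := by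
    have := AddSubgroup.card_eq_card_quotient_mul_card_addSubgroup ψ.ker
    rwa [Nat.card_congr (QuotientAddGroup.quotientKerEquivOfSurjective _ hsurj).toEquiv,
      card_dual] at this
  have h2 : Nat.card ψ.ker = Nat.card ↥(N ⊓ perp B M) := by
    rw [hker, ← AddSubgroup.inf_addSubgroupOf_right]
    rw [Nat.card_congr (AddSubgroup.addSubgroupOfEquivOfLe inf_le_right).toEquiv]
    rw [inf_comm]
  have h3 : Nat.card ↥M = Nat.card (↥M ⧸ K) * Nat.card ↥(M ⊓ N) := by
    have := AddSubgroup.card_eq_card_quotient_mul_card_addSubgroup K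
    rwa [hK, Nat.card_congr (AddSubgroup.addSubgroupOfEquivOfLe inf_le_left).toEquiv] at this
  rw [h1, h2, h3]
  ring

end Pairing

end Stmt14Aux

end Stmt14Aux

/-- For three Lagrangian subgroups `L₁, L₂, L₃` of a finite abelian group with a perfect
alternating pairing, `|L₁ ⊓ L₂| · |L₃ ⊓ (L₁ ⊔ L₂)| = |L₁ ⊓ L₂ ⊓ L₃| · |L₃|`. -/
theorem stmt14 {G : Type*} [AddCommGroup G] [Finite G]
    (B : G →+ G →+ AddCircle (1 : ℝ))
    (hperf : Function.Bijective ⇑B)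
    (halt : ∀ g : G, B g g = 0)
    (L₁ L₂ L₃ : AddSubgroup G)
    (hL₁ : ∀ x : G, x ∈ L₁ ↔ ∀ l ∈ L₁, B x l = 0)
    (hL₂ : ∀ x : G, x ∈ L₂ ↔ ∀ l ∈ L₂, B x l = 0)
    (hL₃ : ∀ x : G, x ∈ L₃ ↔ ∀ l ∈ L₃, B x l = 0) :
    Nat.card ↥(L₁ ⊓ L₂) * Nat.card ↥(L₃ ⊓ (L₁ ⊔ L₂)) =
      Nat.card ↥(L₁ ⊓ L₂ ⊓ L₃) * Nat.card ↥L₃ := by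
  open Stmt14Aux in
  have hL₃' : perp B L₃ = L₃ := by
    ext x; rw [mem_perp]; exact (hL₃ x).symm
  have hperpsup : Stmt14Aux.perp B (L₁ ⊔ L₂) = L₁ ⊓ L₂ := by
    ext x
    rw [Stmt14Aux.mem_perp, AddSubgroup.mem_inf, hL₁ x, hL₂ x]
    constructor
    · intro h
      exact ⟨fun l hl => h l (AddSubgroup.mem_sup_left hl),
        fun l hl => h l (AddSubgroup.mem_sup_right hl)⟩
    · rintro ⟨h1, h2⟩ l hl
      have hle : L₁ ⊔ L₂ ≤ (B x).ker :=
        sup_le (fun a ha => h1 a ha) (fun a ha => h2 a ha)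
      exact hle hl
  have hperpM : Stmt14Aux.perp B (L₁ ⊓ L₂) = L₁ ⊔ L₂ := by
    rw [← hperpsup, Stmt14Aux.perp_perp B hperf halt]
  have key := Stmt14Aux.key_count B hperf halt (L₁ ⊓ L₂) L₃ hL₃'
  rw [hperpM] at key
  exact key.symm
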